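/- Let Γ be a group acting on the inverse limit X_∞ of coset spaces of a group chain {Γ_ℓ} with all relative indices [Γ_{ℓ-1} : Γ_ℓ] = d for a fixed d ≥ 2. Then for every γ ∈ Γ, every prime p in the prime spectrum of the Steinitz order ξ(γ) = lcm{ #(⟨γ⟩/(⟨γ⟩ ∩ C_ℓ)) : ℓ > 0 } divides lcm{2, 3, …, d}; hence the number of distinct types of elements of Γ is at most 2^{N_d}, where N_d is the number of primes ≤ d. -/

import Mathlib

/-- A Steinitz number, encoded by its characteristic function on the primes. -/
abbrev SteinitzNum := Nat.Primes → ℕ∞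

/-- Asymptotic equivalence of Steinitz numbers. -/
def steinitzEquiv (χ₁ χ₂ : SteinitzNum) : Prop :=
  ∃ m m' : ℕ, 0 < m ∧ 0 < m' ∧
    ∀ p : Nat.Primes, (m.factorization p : ℕ∞) + χ₁ p = (m'.factorization p : ℕ∞) + χ₂ p

/-- The Steinitz number `lcm {f ℓ : ℓ}` of a sequence of natural numbers. -/
noncomputable def steinitzOfSeq (f : ℕ → ℕ) : SteinitzNum :=
  fun p => ⨆ ℓ : ℕ, ((f ℓ).factorization p : ℕ∞)

/-- The Steinitz order `ξ(γ) = lcm { #(⟨γ⟩/(⟨γ⟩ ∩ C_ℓ)) : ℓ }` of `γ` along the chain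
of normal cores `C_ℓ` of the `Γ_ℓ`. -/
noncomputable def steinitzOrder {G : Type*} [Group G] (Γ : ℕ → Subgroup G) (γ : G) :
    SteinitzNum :=
  steinitzOfSeq fun ℓ => ((Γ ℓ).normalCore.subgroupOf (Subgroup.zpowers γ)).index


lemma pow_mem_iff_index_dvd {G : Type*} [Group G] (H : Subgroup G) (γ : G) (m : ℕ) :
    γ ^ m ∈ H ↔ (H.subgroupOf (Subgroup.zpowers γ)).index ∣ m := by
  set K := Subgroup.zpowers γ with hK
  set g : K := ⟨γ, Subgroup.mem_zpowers γ⟩ with hg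
  have htop : Subgroup.zpowers g = (⊤ : Subgroup K) := by
    ext x
    simp only [Subgroup.mem_top, iff_true]
    obtain ⟨n, hn⟩ := x.2
    exact ⟨n, Subtype.ext (by simpa using hn)⟩
  set Q := K ⧸ (H.subgroupOf K)
  have horder : orderOf ((g : Q)) = (H.subgroupOf K).index := by
    rw [← Nat.card_zpowers]
    have : Subgroup.zpowers ((g : Q)) = ⊤ := by
      rw [show ((g : Q)) = QuotientGroup.mk' (H.subgroupOf K) g from rfl,
        ← MonoidHom.map_zpowers, htop]
      exact Subgroup.map_top_of_surjective _ (QuotientGroup.mk'_surjective _)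
    rw [this, Subgroup.index]
    exact Nat.card_congr Subgroup.topEquiv.toEquiv
  rw [← horder, orderOf_dvd_iff_pow_eq_one]
  have : ((g : Q)) ^ m = ((g ^ m : K) : Q) := rfl
  rw [this, QuotientGroup.eq_one_iff, Subgroup.mem_subgroupOf]
  norm_num
  rfl

lemma fact_prod (s : Finset ℕ) (hs : ∀ q ∈ s, q.Prime) (e : ℕ → ℕ) (r : ℕ) :
    (∏ q ∈ s, q ^ e q).factorization r = if r ∈ s then e r else 0 := by
  rw [Nat.factorization_prod (fun q hq => pow_ne_zero _ (hs q hq).pos.ne')]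
  rw [Finsupp.finset_sum_apply]
  rw [Finset.sum_congr rfl (fun q hq => by
    rw [Nat.Prime.factorization_pow (hs q hq), Finsupp.single_apply])]
  simp [Finset.sum_ite_eq]

/-- For a `d`-regular group chain (all relative indices `[Γ_ℓ : Γ_{ℓ+1}] = d`), every
prime in the prime spectrum of the Steinitz order `ξ(γ)` of any `γ ∈ Γ` divides
`lcm {2, …, d}`; hence the number of distinct types of elements of `Γ` is at most
`2^{N_d}`, where `N_d` is the number of primes `≤ d`. -/
theorem dRegular_typeset_finite {G : Type*} [Group G] (d : ℕ) (hd : 2 ≤ d)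
    (Γ : ℕ → Subgroup G) (h0 : Γ 0 = ⊤) (hdesc : ∀ ℓ, Γ (ℓ + 1) ≤ Γ ℓ)
    (hreg : ∀ ℓ, ((Γ (ℓ + 1)).subgroupOf (Γ ℓ)).index = d) :
    (∀ γ : G, ∀ p : Nat.Primes, steinitzOrder Γ γ p ≠ 0 →
        (p : ℕ) ∣ (Finset.Icc 2 d).lcm id) ∧
    ∃ T : Set SteinitzNum, T.Finite ∧
      Nat.card T ≤ 2 ^ ((Finset.Icc 2 d).filter Nat.Prime).card ∧
      ∀ γ : G, ∃ χ ∈ T, steinitzEquiv (steinitzOrder Γ γ) χ := by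
  classical
  set L := (Finset.Icc 2 d).lcm id with hLdef
  have hLfac : L ∣ (Nat.factorial d) := by
    apply Finset.lcm_dvd
    intro k hk
    obtain ⟨h2, hkd⟩ := Finset.mem_Icc.mp hk
    simp only [id_eq]
    exact Nat.dvd_factorial (by omega) hkd
  have hL0 : L ≠ 0 := by
    intro h
    rw [h] at hLfac
    exact (Nat.factorial_pos d).ne' (Nat.eq_zero_of_zero_dvd hLfac)
  have hdvdL : ∀ k, 1 ≤ k → k ≤ d → k ∣ L := by
    intro k h1 h2
    rcases Nat.eq_or_lt_of_le h1 with h | h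
    · rw [← h]; exact one_dvd _
    · exact (Finset.dvd_lcm (Finset.mem_Icc.mpr ⟨h, h2⟩) : id k ∣ L)
  -- index of Γ ℓ is d ^ ℓ
  have hregrel : ∀ ℓ, (Γ (ℓ + 1)).relIndex (Γ ℓ) = d := hreg
  have hidx : ∀ ℓ, (Γ ℓ).index = d ^ ℓ := by
    intro ℓ
    induction ℓ with
    | zero => simp [h0]
    | succ ℓ ih =>
      have h1 : (Γ (ℓ + 1)).relIndex (Γ ℓ) * (Γ ℓ).index = (Γ (ℓ + 1)).index :=
        Subgroup.relIndex_mul_index (hdesc ℓ)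
      have h2 : (Γ (ℓ + 1)).relIndex (Γ ℓ) = d := hregrel ℓ
      rw [h2, ih] at h1
      rw [← h1, pow_succ, mul_comm]
  -- the sequence of orders
  set f : G → ℕ → ℕ :=
    fun γ ℓ => (((Γ ℓ).normalCore).subgroupOf (Subgroup.zpowers γ)).index with hfdef
  have key : ∀ γ : G, ∀ ℓ, f γ (ℓ + 1) ∣ f γ ℓ * L := by
    intro γ ℓ
    rw [← pow_mem_iff_index_dvd]
    have hmem : ∀ b : G, b * γ ^ (f γ ℓ * L) * b⁻¹ ∈ Γ (ℓ + 1) := by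
      intro b
      have hγf : γ ^ (f γ ℓ) ∈ (Γ ℓ).normalCore :=
        (pow_mem_iff_index_dvd _ γ _).mpr dvd_rfl
      set δ := b * γ ^ (f γ ℓ) * b⁻¹ with hδdef
      have hδ : δ ∈ (Γ ℓ).normalCore :=
        (Subgroup.normalCore_normal (Γ ℓ)).conj_mem _ hγf b
      have hδΓ : δ ∈ Γ ℓ := (Γ ℓ).normalCore_le hδ
      set k := ((Γ (ℓ + 1)).subgroupOf (Subgroup.zpowers δ)).index with hkdef
      have hk0 : k ≠ 0 := by
        intro h
        have : (Γ (ℓ + 1)).index = 0 :=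
          Subgroup.index_eq_zero_of_relIndex_eq_zero h
        rw [hidx (ℓ + 1)] at this
        exact (pow_ne_zero _ (by omega : d ≠ 0)) this
      have hkd : k ≤ d := by
        have hrel : (Γ (ℓ + 1)).relIndex (Γ ℓ) ≠ 0 := by
          rw [hregrel ℓ]; omega
        have h3 := Subgroup.relIndex_le_of_le_right
          (Subgroup.zpowers_le.mpr hδΓ) hrel
        rw [hregrel ℓ] at h3
        exact h3
      have hkL : k ∣ L := hdvdL k (Nat.one_le_iff_ne_zero.mpr hk0) hkd
      have hδL : δ ^ L ∈ Γ (ℓ + 1) := (pow_mem_iff_index_dvd _ δ L).mpr hkL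
      have heq : δ ^ L = b * γ ^ (f γ ℓ * L) * b⁻¹ := by
        rw [hδdef, conj_pow, ← pow_mul]
      rw [← heq]
      exact hδL
    exact hmem
  have hf0 : ∀ γ : G, f γ 0 = 1 := by
    intro γ
    have : (Γ 0).normalCore = ⊤ := by rw [h0]; exact Subgroup.normalCore_eq_self ⊤
    simp [hfdef, this]
  have hfL : ∀ γ : G, ∀ ℓ, f γ ℓ ∣ L ^ ℓ := by
    intro γ ℓ
    induction ℓ with
    | zero => simp [hf0 γ]
    | succ ℓ ih =>
      calc f γ (ℓ + 1) ∣ f γ ℓ * L := key γ ℓ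
        _ ∣ L ^ ℓ * L := mul_dvd_mul_right ih L
        _ = L ^ (ℓ + 1) := (pow_succ L ℓ).symm
  -- part 1
  have part1 : ∀ γ : G, ∀ p : Nat.Primes, steinitzOrder Γ γ p ≠ 0 →
      (p : ℕ) ∣ L := by
    intro γ p hne
    have hex : ∃ ℓ, (f γ ℓ).factorization p ≠ 0 := by
      by_contra h
      push_neg at h
      apply hne
      have : ∀ ℓ : ℕ, ((f γ ℓ).factorization p : ℕ∞) = 0 := fun ℓ => by
        rw [h ℓ]; rfl
      simp only [steinitzOrder, steinitzOfSeq, hfdef]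
      simp only [hfdef] at this
      simp [this]
    obtain ⟨ℓ, hℓ⟩ := hex
    have hdvd : (p : ℕ) ∣ f γ ℓ := Nat.dvd_of_factorization_pos hℓ
    exact p.2.dvd_of_dvd_pow (hdvd.trans (hfL γ ℓ))
  refine ⟨part1, ?_⟩
  -- part 2
  set N := (Finset.Icc 2 d).filter Nat.Prime with hNdef
  have hNprime : ∀ q ∈ N, q.Prime := fun q hq => (Finset.mem_filter.mp hq).2
  set F : Finset ℕ → SteinitzNum :=
    fun S p => if (p : ℕ) ∈ S then (⊤ : ℕ∞) else 0 with hFdef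
  refine ⟨↑(N.powerset.image F), Finset.finite_toSet _, ?_, ?_⟩
  · rw [Nat.card_coe_set_eq, Set.ncard_coe_finset]
    calc (N.powerset.image F).card ≤ N.powerset.card := Finset.card_image_le
      _ = 2 ^ N.card := Finset.card_powerset N
  · intro γ
    set ξ := steinitzOrder Γ γ with hξdef
    set S := N.filter (fun q => ∃ hq : q.Prime, ξ ⟨q, hq⟩ = ⊤) with hSdef
    refine ⟨F S, by
      rw [Finset.mem_coe]
      exact Finset.mem_image_of_mem F (Finset.mem_powerset.mpr (Finset.filter_subset _ _)), ?_⟩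
    set e : ℕ → ℕ := fun q => if hq : q.Prime then (ξ ⟨q, hq⟩).toNat else 0 with hedef
    refine ⟨1, ∏ q ∈ N, q ^ e q, one_pos,
      Finset.prod_pos (fun q hq => pow_pos (hNprime q hq).pos _), ?_⟩
    intro p
    have hfacm' : (∏ q ∈ N, q ^ e q).factorization (p : ℕ) =
        if (p : ℕ) ∈ N then e (p : ℕ) else 0 := fact_prod N hNprime e (p : ℕ)
    rw [Nat.factorization_one]
    simp only [Finsupp.coe_zero, Pi.zero_apply, Nat.cast_zero, zero_add, hfacm']
    by_cases hpN : (p : ℕ) ∈ N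
    · rw [if_pos hpN]
      by_cases htop : ξ p = ⊤
      · have hpS : (p : ℕ) ∈ S := by
          rw [hSdef, Finset.mem_filter]
          exact ⟨hpN, p.2, htop⟩
        rw [hFdef]
        simp only [if_pos hpS]
        rw [htop, add_top]
      · have hpS : (p : ℕ) ∉ S := by
          rw [hSdef, Finset.mem_filter]
          rintro ⟨-, hq, hξq⟩
          exact htop hξq
        rw [hFdef]
        simp only [if_neg hpS, add_zero]
        rw [hedef]
        simp only [dif_pos p.2]
        exact (ENat.coe_toNat htop).symm
    · rw [if_neg hpN]
      have hpS : (p : ℕ) ∉ S := fun h => hpN (Finset.mem_filter.mp h).1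
      rw [hFdef]
      simp only [if_neg hpS, add_zero, Nat.cast_zero]
      by_contra hne
      have hdvd : (p : ℕ) ∣ L := part1 γ p (by simpa using hne)
      apply hpN
      rw [hNdef, Finset.mem_filter, Finset.mem_Icc]
      exact ⟨⟨p.2.two_le, (Nat.Prime.dvd_factorial p.2).mp (hdvd.trans hLfac)⟩, p.2⟩
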